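/- For any binary sequence s of period N, if S(x) = Σ_{i=0}^{N-1} s_i x^i and T(x) = Σ_{i=0}^{N-1} (-1)^{s_i} x^i, then -2·S(2)·T(2^{-1}) ≡ N + Σ_{τ=1}^{N-1} C_s(τ)·2^τ (mod 2^N - 1), where C_s(τ) = Σ_{i=0}^{N-1} (-1)^{s_i + s_{i+τ}} is the autocorrelation (indices mod N) and 2^{-1} denotes the inverse of 2 modulo 2^N - 1. -/

import Mathlib

theorem stmt_0 (N : ℕ) (hN : 0 < N) (s : ℕ → ℕ) (hs : ∀ i, s i ≤ 1)
    (hper : ∀ i, s (i + N) = s i) :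
    (-2 : ZMod (2 ^ N - 1)) *
        (∑ i ∈ Finset.range N, (s i : ZMod (2 ^ N - 1)) * 2 ^ i) *
        (∑ i ∈ Finset.range N, (-1 : ZMod (2 ^ N - 1)) ^ (s i) * ((2 : ZMod (2 ^ N - 1))⁻¹) ^ i) =
      (N : ZMod (2 ^ N - 1)) +
        ∑ τ ∈ Finset.Ico 1 N,
          ((∑ i ∈ Finset.range N, (-1 : ℤ) ^ (s i + s ((i + τ) % N)) : ℤ) : ZMod (2 ^ N - 1)) *
            2 ^ τ := by
  set R := ZMod (2 ^ N - 1) with hR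
  have hpow1 : (1 : ℕ) ≤ 2 ^ N := Nat.one_le_two_pow
  have h2N : (2 : R) ^ N = 1 := by
    have h := ZMod.natCast_self (2 ^ N - 1)
    rw [Nat.cast_sub hpow1] at h
    push_cast at h
    linear_combination h
  have hu : IsUnit (2 : R) := by
    refine IsUnit.of_mul_eq_one (a := (2 : R)) (2 ^ (N - 1)) ?_
    rw [← pow_succ', Nat.sub_add_cancel hN]
    exact h2N
  have hinv : (2 : R) * (2 : R)⁻¹ = 1 := ZMod.mul_inv_of_unit _ hu
  have hmod : ∀ k, (2 : R) ^ (k % N) = 2 ^ k := by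
    intro k
    conv_rhs => rw [← Nat.mod_add_div k N]
    rw [pow_add, pow_mul, h2N, one_pow, mul_one]
  have hcj : ∀ j, j ≤ N → ((2 : R)⁻¹) ^ j = 2 ^ (N - j) := by
    intro j hj
    have h1 : (2 : R) ^ (N - j) * 2 ^ j = 1 := by
      rw [← pow_add, Nat.sub_add_cancel hj, h2N]
    have h2 : (2 : R) ^ j * ((2 : R)⁻¹) ^ j = 1 := by
      rw [← mul_pow, hinv, one_pow]
    calc ((2 : R)⁻¹) ^ j = (2 ^ (N - j) * 2 ^ j) * ((2:R)⁻¹) ^ j := by rw [h1, one_mul]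
      _ = 2 ^ (N - j) * ((2:R) ^ j * ((2:R)⁻¹) ^ j) := by ring
      _ = 2 ^ (N - j) := by rw [h2, mul_one]
  have hgeom : ∑ i ∈ Finset.range N, (2 : R) ^ i = 0 := by
    have h := geom_sum_mul (2 : R) N
    rw [h2N, sub_self] at h
    have h21 : (2 : R) - 1 = 1 := by norm_num
    rwa [h21, mul_one] at h
  have hstep : (-2 : R) * (∑ i ∈ Finset.range N, (s i : R) * 2 ^ i)
      = ∑ i ∈ Finset.range N, (-1 : R) ^ (s i) * 2 ^ i := by
    rw [Finset.mul_sum]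
    rw [show (∑ i ∈ Finset.range N, (-1 : R) ^ (s i) * 2 ^ i)
        = (∑ i ∈ Finset.range N, (((-1 : R) ^ (s i) - 1) * 2 ^ i))
          + ∑ i ∈ Finset.range N, (2 : R) ^ i from by
      rw [← Finset.sum_add_distrib]
      apply Finset.sum_congr rfl
      intros; ring]
    rw [hgeom, add_zero]
    apply Finset.sum_congr rfl
    intro i _
    rcases Nat.le_one_iff_eq_zero_or_eq_one.mp (hs i) with h | h <;> rw [h] <;> ring
  rw [hstep, Finset.sum_mul_sum, Finset.sum_comm]
  have hswap : ∀ j ∈ Finset.range N,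
      (∑ i ∈ Finset.range N,
        ((-1 : R) ^ (s i) * 2 ^ i) * ((-1 : R) ^ (s j) * ((2 : R)⁻¹) ^ j))
      = ∑ τ ∈ Finset.range N, ((-1 : R) ^ (s j) * (-1 : R) ^ (s ((j + τ) % N))) * 2 ^ τ := by
    intro j hj
    rw [Finset.mem_range] at hj
    refine Finset.sum_nbij' (fun i => (i + (N - j)) % N) (fun τ => (j + τ) % N)
      (fun a _ => Finset.mem_range.mpr (Nat.mod_lt _ hN))
      (fun a _ => Finset.mem_range.mpr (Nat.mod_lt _ hN)) ?_ ?_ ?_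
    · intro a ha
      rw [Finset.mem_range] at ha
      show (j + (a + (N - j)) % N) % N = a
      rw [Nat.add_mod_mod, show j + (a + (N - j)) = a + N by omega,
        Nat.add_mod_right, Nat.mod_eq_of_lt ha]
    · intro a ha
      rw [Finset.mem_range] at ha
      show ((j + a) % N + (N - j)) % N = a
      rw [Nat.mod_add_mod, show j + a + (N - j) = a + N by omega,
        Nat.add_mod_right, Nat.mod_eq_of_lt ha]
    · intro a ha
      rw [Finset.mem_range] at ha
      have e1 : (j + (a + (N - j)) % N) % N = a := by
        rw [Nat.add_mod_mod, show j + (a + (N - j)) = a + N by omega,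
          Nat.add_mod_right, Nat.mod_eq_of_lt ha]
      rw [e1, hmod, pow_add, hcj j (le_of_lt hj)]
      ring
  rw [Finset.sum_congr rfl hswap, Finset.sum_comm]
  have hC : ∀ τ, (∑ j ∈ Finset.range N, ((-1 : R) ^ (s j) * (-1 : R) ^ (s ((j + τ) % N))) * 2 ^ τ)
      = ((∑ i ∈ Finset.range N, (-1 : ℤ) ^ (s i + s ((i + τ) % N)) : ℤ) : R) * 2 ^ τ := by
    intro τ
    push_cast
    rw [Int.cast_sum (R := R), Finset.sum_mul]; push_cast
    apply Finset.sum_congr rfl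
    intros; rw [pow_add]
  rw [Finset.sum_congr rfl (fun τ _ => hC τ)]
  rw [Finset.range_eq_Ico]
  rw [Finset.sum_eq_sum_Ico_succ_bot hN]
  congr 1
  have h0 : ∀ i ∈ Finset.Ico 0 N, ((-1 : ℤ) ^ (s i + s ((i + 0) % N))) = 1 := by
    intro i hi
    rw [Finset.mem_Ico] at hi
    obtain ⟨-, hi⟩ := hi
    rw [add_zero, Nat.mod_eq_of_lt hi, ← two_mul, pow_mul]
    norm_num
  rw [Finset.sum_congr rfl h0]
  simp
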